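/- The predictive coding inference dynamics for a two-layer linear network with clamped boundaries is a linear discrete dynamical system x^{(1)}_{t+1} = (I − γ(I + (θ^{(0)})ᵀθ^{(0)})) x^{(1)}_t + γ b, and it converges to the unique energy minimizer for any initialization whenever 0 < γ < 2/(1 + ‖θ^{(0)}‖²_op), where ‖·‖_op is the operator norm. -/

import Mathlib

private lemma sq_le_imp_le {u c y : ℝ} (hy : 0 ≤ y) (hc : 0 ≤ c)
    (h : u ^ 2 ≤ c ^ 2 * y ^ 2) : u ≤ c * y := by
  have hcy : 0 ≤ c * y := mul_nonneg hc hy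
  nlinarith

private lemma contract_bound {E F : Type*} [NormedAddCommGroup E] [InnerProductSpace ℝ E]
    [NormedAddCommGroup F] [InnerProductSpace ℝ F] [CompleteSpace E] [CompleteSpace F]
    (T : E →L[ℝ] F) (γ : ℝ) (y : E) :
    ‖(1 - γ) • y - γ • (ContinuousLinearMap.adjoint T) (T y)‖
      ≤ max |1 - γ| |1 - γ * (1 + ‖T‖ ^ 2)| * ‖y‖ := by
  set s : ℝ := ‖T‖ ^ 2 with hs
  set c : ℝ := max |1 - γ| |1 - γ * (1 + s)| with hc
  have hc0 : 0 ≤ c := le_trans (abs_nonneg _) (le_max_left _ _)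
  set w : F := T y with hw
  set v : E := (ContinuousLinearMap.adjoint T) w with hv
  have hq1 : (@inner ℝ _ _ y v) = ‖w‖ ^ 2 := by
    rw [hv, ContinuousLinearMap.adjoint_inner_right, ← hw, real_inner_self_eq_norm_sq]
  have hvle : ‖v‖ ≤ ‖T‖ * ‖w‖ := by
    calc ‖v‖ ≤ ‖ContinuousLinearMap.adjoint T‖ * ‖w‖ :=
          (ContinuousLinearMap.adjoint T).le_opNorm w
      _ = ‖T‖ * ‖w‖ := by rw [ContinuousLinearMap.adjoint.norm_map]
  have hwle : ‖w‖ ≤ ‖T‖ * ‖y‖ := T.le_opNorm y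
  have hv2 : ‖v‖ ^ 2 ≤ s * ‖w‖ ^ 2 := by
    rw [hs]; nlinarith [norm_nonneg v, norm_nonneg w, norm_nonneg T]
  have hq0 : (0 : ℝ) ≤ ‖w‖ ^ 2 := sq_nonneg _
  have hqs : ‖w‖ ^ 2 ≤ s * ‖y‖ ^ 2 := by
    rw [hs]; nlinarith [norm_nonneg w, norm_nonneg y, norm_nonneg T]
  have hexp : ‖(1 - γ) • y - γ • v‖ ^ 2
      = (1 - γ) ^ 2 * ‖y‖ ^ 2 - 2 * γ * (1 - γ) * (@inner ℝ _ _ y v) + γ ^ 2 * ‖v‖ ^ 2 := by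
    rw [norm_sub_sq_real, real_inner_smul_left, real_inner_smul_right,
      norm_smul, norm_smul, Real.norm_eq_abs, Real.norm_eq_abs,
      mul_pow, mul_pow, sq_abs, sq_abs]
    ring
  have key : ‖(1 - γ) • y - γ • v‖ ^ 2 ≤ c ^ 2 * ‖y‖ ^ 2 := by
    rw [hexp, hq1]
    have hc1' : |1 - γ| ≤ c := le_max_left _ _
    have hc2' : |1 - γ * (1 + s)| ≤ c := le_max_right _ _
    have hb1 : (1 - γ) ^ 2 ≤ c ^ 2 := by
      rw [← sq_abs (1 - γ)]; exact pow_le_pow_left₀ (abs_nonneg _) hc1' 2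
    have hb2 : (1 - γ * (1 + s)) ^ 2 ≤ c ^ 2 := by
      rw [← sq_abs (1 - γ * (1 + s))]; exact pow_le_pow_left₀ (abs_nonneg _) hc2' 2
    have hγ2s : γ ^ 2 * ‖v‖ ^ 2 ≤ γ ^ 2 * (s * ‖w‖ ^ 2) :=
      mul_le_mul_of_nonneg_left hv2 (sq_nonneg γ)
    rcases le_or_gt (γ ^ 2 * s - 2 * γ * (1 - γ)) 0 with hcase | hcase
    · nlinarith [sq_nonneg ‖y‖]
    · have hident : (1 - γ) ^ 2 + (γ ^ 2 * s - 2 * γ * (1 - γ)) * s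
          = (1 - γ * (1 + s)) ^ 2 := by ring
      nlinarith [sq_nonneg ‖y‖]
  exact sq_le_imp_le (norm_nonneg _) hc0 key

/-- The predictive coding inference dynamics for a two-layer linear network with clamped
boundaries is the linear discrete dynamical system
`x_{t+1} = (I - γ(I + θ₀ᵀθ₀)) x_t + γ b`, and it converges from any initialization to the
unique energy minimizer `(I + θ₀ᵀθ₀)⁻¹ b` whenever `0 < γ < 2 / (1 + ‖θ₀‖_op²)`. -/
theorem stmt_14 (n0 n1 n2 : ℕ)
    (θ0 : Matrix (Fin n0) (Fin n1) ℝ) (θ1 : Matrix (Fin n1) (Fin n2) ℝ)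
    (sIn : Fin n2 → ℝ) (sOut : Fin n0 → ℝ)
    (A : Matrix (Fin n1) (Fin n1) ℝ) (hA : A = 1 + θ0.transpose * θ0)
    (b : Fin n1 → ℝ) (hb : b = θ1.mulVec sIn + θ0.transpose.mulVec sOut)
    (γ : ℝ) (hγ0 : 0 < γ)
    (hγ2 : γ < 2 / (1 + ‖LinearMap.toContinuousLinearMap (Matrix.toEuclideanLin θ0)‖ ^ 2))
    (xseq : ℕ → (Fin n1 → ℝ))
    (hupd : ∀ t, xseq (t + 1) = xseq t - γ • (A.mulVec (xseq t) - b)) :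
    (∀ t, xseq (t + 1) = (1 - γ • A).mulVec (xseq t) + γ • b)
      ∧ Filter.Tendsto xseq Filter.atTop (nhds (A⁻¹.mulVec b)) := by
  classical
  have hlin : ∀ t, xseq (t + 1) = (1 - γ • A).mulVec (xseq t) + γ • b := by
    intro t
    rw [hupd t, Matrix.sub_mulVec, Matrix.one_mulVec, Matrix.smul_mulVec, smul_sub]
    abel
  refine ⟨hlin, ?_⟩
  -- notation
  let T : EuclideanSpace ℝ (Fin n1) →L[ℝ] EuclideanSpace ℝ (Fin n0) :=
    LinearMap.toContinuousLinearMap (Matrix.toEuclideanLin θ0)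
  have hL0 : (0 : ℝ) < 1 + ‖T‖ ^ 2 := by positivity
  have hγL : γ * (1 + ‖T‖ ^ 2) < 2 := by
    have h := (lt_div_iff₀ hL0).mp hγ2
    exact h
  have hγ2' : γ < 2 := by nlinarith [sq_nonneg ‖T‖]
  -- A is positive definite, hence invertible
  have hApd : A.PosDef := by
    rw [hA, ← Matrix.conjTranspose_eq_transpose_of_trivial]
    exact Matrix.PosDef.one.add_posSemidef (Matrix.posSemidef_conjTranspose_mul_self θ0)
  have hAdet : IsUnit A.det := hApd.det_pos.ne'.isUnit
  have hAx : A.mulVec (A⁻¹.mulVec b) = b := by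
    rw [Matrix.mulVec_mulVec, Matrix.mul_nonsing_inv _ hAdet, Matrix.one_mulVec]
  set x' : Fin n1 → ℝ := A⁻¹.mulVec b with hx'
  -- the error sequence
  set e : ℕ → (Fin n1 → ℝ) := fun t => xseq t - x' with he
  have herec : ∀ t, e (t + 1) = (1 - γ • A).mulVec (e t) := by
    intro t
    show xseq (t + 1) - x' = _
    rw [hupd t, Matrix.sub_mulVec, Matrix.one_mulVec, Matrix.smul_mulVec,
      Matrix.mulVec_sub, hAx]
    show xseq t - γ • (A.mulVec (xseq t) - b) - x'
      = xseq t - x' - γ • (A.mulVec (xseq t) - b)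
    abel
  -- the iteration map, seen on Euclidean space
  have hMform : ∀ y : EuclideanSpace ℝ (Fin n1),
      Matrix.toEuclideanLin (1 - γ • A) y
        = (1 - γ) • y - γ • (ContinuousLinearMap.adjoint T) (T y) := by
    intro y
    have h2 : Matrix.toEuclideanLin (θ0.transpose * θ0) y
        = (ContinuousLinearMap.adjoint T) (T y) := by
      have hcomp : Matrix.toEuclideanLin (θ0.transpose * θ0) y
          = Matrix.toEuclideanLin θ0.transpose (Matrix.toEuclideanLin θ0 y) := by
        simp [Matrix.toEuclideanLin_apply, Matrix.mulVec_mulVec]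
      rw [hcomp, ← Matrix.conjTranspose_eq_transpose_of_trivial,
        Matrix.toEuclideanLin_conjTranspose_eq_adjoint,
        LinearMap.adjoint_eq_toCLM_adjoint]
      rfl
    have h1 : Matrix.toEuclideanLin (1 : Matrix (Fin n1) (Fin n1) ℝ) y = y := by
      rw [Matrix.toEuclideanLin_eq_toLin, Matrix.toLin_one]
      rfl
    have hAy : Matrix.toEuclideanLin A y
        = y + (ContinuousLinearMap.adjoint T) (T y) := by
      rw [hA, map_add, LinearMap.add_apply, h1, h2]
    rw [map_sub, map_smul, LinearMap.sub_apply, LinearMap.smul_apply, h1, hAy]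
    module
  -- the contraction constant
  set c : ℝ := max |1 - γ| |1 - γ * (1 + ‖T‖ ^ 2)| with hc
  have hc0 : 0 ≤ c := le_trans (abs_nonneg _) (le_max_left _ _)
  have hc1 : c < 1 := by
    have h1 : |1 - γ| < 1 := abs_lt.mpr ⟨by linarith, by linarith⟩
    have h2 : |1 - γ * (1 + ‖T‖ ^ 2)| < 1 := by
      have : 0 < γ * (1 + ‖T‖ ^ 2) := mul_pos hγ0 hL0
      exact abs_lt.mpr ⟨by linarith, by linarith⟩
    exact max_lt h1 h2
  have hle : ∀ y : EuclideanSpace ℝ (Fin n1),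
      ‖Matrix.toEuclideanLin (1 - γ • A) y‖ ≤ c * ‖y‖ := by
    intro y
    rw [hMform y, hc]
    exact contract_bound T γ y
  -- the error on Euclidean space
  set eE : ℕ → EuclideanSpace ℝ (Fin n1) :=
    fun t => (WithLp.equiv 2 (Fin n1 → ℝ)).symm (e t) with heE
  have heErec : ∀ t, eE (t + 1) = Matrix.toEuclideanLin (1 - γ • A) (eE t) := by
    intro t
    rw [heE]
    simp only [WithLp.equiv_symm_apply, Matrix.toEuclideanLin_toLp, Matrix.toLin'_apply]
    rw [herec t]
  have hbound : ∀ t, ‖eE t‖ ≤ c ^ t * ‖eE 0‖ := by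
    intro t
    induction t with
    | zero => simp
    | succ t ih =>
      calc ‖eE (t + 1)‖ = ‖Matrix.toEuclideanLin (1 - γ • A) (eE t)‖ := by rw [heErec]
        _ ≤ c * ‖eE t‖ := hle _
        _ ≤ c * (c ^ t * ‖eE 0‖) := mul_le_mul_of_nonneg_left ih hc0
        _ = c ^ (t + 1) * ‖eE 0‖ := by ring
  have hnorm0 : Filter.Tendsto (fun t => ‖eE t‖) Filter.atTop (nhds 0) := by
    apply squeeze_zero (fun t => norm_nonneg _) hbound
    have := (tendsto_pow_atTop_nhds_zero_of_lt_one hc0 hc1).mul_const ‖eE 0‖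
    simpa using this
  have heE0 : Filter.Tendsto eE Filter.atTop (nhds 0) :=
    tendsto_zero_iff_norm_tendsto_zero.mpr hnorm0
  have he0 : Filter.Tendsto e Filter.atTop (nhds 0) := by
    have hcont := ((EuclideanSpace.equiv (Fin n1) ℝ).continuous.tendsto 0).comp heE0
    have heq : (⇑(EuclideanSpace.equiv (Fin n1) ℝ) ∘ eE) = e := by
      funext t
      simp [heE, EuclideanSpace.equiv]
      rfl
    rw [heq, map_zero] at hcont
    exact hcont
  have hfin := he0.add_const x'
  rw [zero_add] at hfin
  have heq2 : (fun t => e t + x') = xseq := by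
    funext t
    simp [he]
  rwa [heq2] at hfin
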